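/- Let R = ℚ[α,β,x,y,z]/I be the graded quotient ring described in the context. Then α^{15} = 0 in R, and consequently α ∈ P₀ R¹ (the class α has perversity 0). -/
import Mathlib


open MvPolynomial Module

set_option synthInstance.maxHeartbeats 1000000
set_option maxHeartbeats 1000000

noncomputable section

abbrev P5 : Type := MvPolynomial (Fin 5) ℚ

def vA : P5 := X 0
def vB : P5 := X 1
def vX : P5 := X 2
def vY : P5 := X 3
def vZ : P5 := X 4

/-- weights: α, β have degree 1; x, y, z have degree 2 -/
def wt5 : Fin 5 → ℕ := ![1, 1, 2, 2, 2]

/-- the Chung–Moon ideal of relations for `M_{4,1}` -/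
def I41 : Ideal P5 := Ideal.span
  { vX * vZ - vY * vZ,
    vB ^ 2 * vZ - 3 * vY * vZ - 9 * vZ ^ 2,
    3 * vA ^ 2 * vZ - vA * vB * vZ + vY * vZ,
    vB ^ 2 * vY - 3 * vY ^ 2 - 9 * vY * vZ,
    vB ^ 2 * vX - vX * vY - 3 * vY ^ 2 - 3 * vA * vB * vZ - 9 * vY * vZ + 9 * vZ ^ 2,
    vB ^ 4 + 3 * vX ^ 2 - 9 * vX * vY - 3 * vY ^ 2 - 54 * vY * vZ - 81 * vZ ^ 2,
    vB * vY * vZ + 9 * vA * vZ ^ 2 - 3 * vB * vZ ^ 2,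
    2 * vB * vX * vY - 3 * vB * vY ^ 2 - 9 * vA * vY * vZ - 27 * vA * vZ ^ 2 + 9 * vB * vZ ^ 2,
    3 * vB * vX ^ 2 - 7 * vB * vY ^ 2 - 36 * vA * vY * vZ - 108 * vA * vZ ^ 2 + 36 * vB * vZ ^ 2,
    vA ^ 12 + 3 * vA ^ 11 * vB + 3 * vA ^ 10 * (vB ^ 2 + 2 * vX - vY)
      + vA ^ 9 * (-vB ^ 3 + 12 * vB * vX + 2 * vB * vY)
      + 3 * vA ^ 8 * (9 * vX ^ 2 - 16 * vX * vY + 17 * vY ^ 2)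
      + 28 * vA ^ 7 * vB * vY ^ 2 + 56 * vA ^ 6 * vY ^ 3
      + 201 * vA * vB * vZ ^ 5 - 19 * vY * vZ ^ 5 - 613 * vZ ^ 6,
    6 * vA ^ 10 * vX * vY - 12 * vA ^ 10 * vY ^ 2 - 10 * vA ^ 9 * vB * vY ^ 2
      - 45 * vA ^ 8 * vY ^ 3 - 104 * vA * vB * vZ ^ 6 + 2 * vY * vZ ^ 6 + 310 * vZ ^ 7 }

/-- `R = ℚ[α,β,x,y,z]/I`, isomorphic to `H^{2*}(M_{4,1}, ℚ)` -/
abbrev R41 : Type := P5 ⧸ I41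

def qm : P5 →ₐ[ℚ] R41 := Ideal.Quotient.mkₐ ℚ I41

/-- the degree-`e` graded piece `R^e` of `R` -/
def gr (e : ℕ) : Submodule ℚ R41 :=
  (weightedHomogeneousSubmodule ℚ wt5 e).map qm.toLinearMap

def gA : R41 := qm vA
def gB : R41 := qm vB
def gX : R41 := qm vX
def gY : R41 := qm vY
def gZ : R41 := qm vZ

/-- multiplication by `α^n` on `R` -/
def mulA (n : ℕ) : R41 →ₗ[ℚ] R41 := LinearMap.mulLeft ℚ (gA ^ n)

/-- `Ker(α^n)`, interpreted as `0` when `n ≤ 0` -/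
def kerA (n : ℤ) : Submodule ℚ R41 :=
  if n ≤ 0 then ⊥ else LinearMap.ker (mulA n.toNat)

/-- the perverse filtration
`P_k R^e = Σ_{i ≥ 1} (Ker(α^{14+k-2e+i}) ∩ Im(α^{i-1})) ∩ R^e` -/
def pervP (k : ℤ) (e : ℕ) : Submodule ℚ R41 :=
  (⨆ i : ℕ, kerA (14 + k - 2 * (e : ℤ) + ((i : ℤ) + 1)) ⊓ LinearMap.range (mulA i)) ⊓ gr e

/-- `c₂(0) = (25/32)α + (1/4)β` -/
def c20 : R41 := (25/32 : ℚ) • gA + (1/4 : ℚ) • gB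

/-- `c₁(2) = (3/16)α² + (1/4)αβ + x - y - z` -/
def c12 : R41 := (3/16 : ℚ) • gA ^ 2 + (1/4 : ℚ) • (gA * gB) + gX - gY - gZ

/-- `c₂(1) = (55/128)α² + (5/16)αβ + (3/8)β² - (3/4)x - (1/4)y - (17/4)z` -/
def c21 : R41 := (55/128 : ℚ) • gA ^ 2 + (5/16 : ℚ) • (gA * gB) + (3/8 : ℚ) • gB ^ 2
  - (3/4 : ℚ) • gX - (1/4 : ℚ) • gY - (17/4 : ℚ) • gZ

/-- `c₃(0) = (75/512)α² + (15/128)αβ - (1/16)β² + (9/32)x - (1/32)y - (1/32)z` -/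
def c30 : R41 := (75/512 : ℚ) • gA ^ 2 + (15/128 : ℚ) • (gA * gB) - (1/16 : ℚ) • gB ^ 2
  + (9/32 : ℚ) • gX - (1/32 : ℚ) • gY - (1/32 : ℚ) • gZ

set_option maxHeartbeats 10000000 in
set_option maxRecDepth 100000 in
lemma vA15_mem : vA ^ 15 ∈ I41 := by
  have hcert : (162 : P5) * vA ^ 15 =
        ((-56862)*vA^10*vB + (-574452)*vA^9*vB^2 + (1442691)*vA^9*vY + (3870990)*vA^9*vZ + (-244944)*vA^8*vB*vY + (-1312200)*vA^8*vB*vZ + (4164048)*vA^7*vY^2 + (11757312)*vA^7*vY*vZ + (-3919104)*vA^6*vB*vY*vZ + (195372)*vA^2*vB*vZ^4 + (-781488)*vA*vB^2*vZ^4 + (-18480)*vA*vY^5 + (-1332000)*vA*vY^4*vZ + (-10420488)*vA*vY^3*vZ^2 + (-26113590)*vA*vY^2*vZ^3 + (-20315286)*vA*vY*vZ^4 + (-595836)*vA*vZ^5 + (2637846)*vB*vY*vZ^4 + (2383344)*vB*vZ^5) * (vX * vZ - vY * vZ)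
      + ((-58320)*vA^11 + (32076)*vA^10*vB + (-526176)*vA^9*vY + (710046)*vA^9*vZ + (379134)*vA^7*vY^2 + (71928)*vA^7*vY*vZ + (30618)*vA^7*vZ^2 + (172494)*vA^5*vY^3 + (148122)*vA^5*vY^2*vZ + (109836)*vA^5*vY*vZ^2 + (30618)*vA^5*vZ^3 + (9240)*vA^3*vY^4 + (223992)*vA^3*vY^3*vZ + (325836)*vA^3*vY^2*vZ^2 + (99630)*vA^3*vY*vZ^3 + (117450)*vA^3*vZ^4 + (-195372)*vA^2*vB*vZ^4 + (260496)*vA*vB^2*vZ^4 + (-22246)*vA*vY^5 + (-81882)*vA*vY^4*vZ + (103176)*vA*vY^3*vZ^2 + (289224)*vA*vY^2*vZ^3 + (626148)*vA*vY*vZ^4 + (2380554)*vA*vZ^5 + (-24624)*vB*vY*vZ^4 + (-794448)*vB*vZ^5) * (vB ^ 2 * vZ - 3 * vY * vZ - 9 * vZ ^ 2)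
      + ((-8748)*vA^10*vB + (-46170)*vA^9*vY + (204849)*vA^9*vZ + (27864)*vA^8*vB*vY + (310554)*vA^8*vB*vZ + (80514)*vA^7*vY^2 + (1344276)*vA^7*vY*vZ + (-341172)*vA^7*vZ^2 + (52542)*vA^6*vB*vY^2 + (71928)*vA^6*vB*vY*vZ + (30618)*vA^6*vB*vZ^2 + (-83160)*vA^5*vY^3 + (-463482)*vA^5*vY^2*vZ + (-1599426)*vA^5*vY*vZ^2 + (91854)*vA^5*vZ^3 + (172494)*vA^4*vB*vY^3 + (148122)*vA^4*vB*vY^2*vZ + (109836)*vA^4*vB*vY*vZ^2 + (30618)*vA^4*vB*vZ^3 + (200214)*vA^3*vY^4 + (820098)*vA^3*vY^3*vZ + (1087344)*vA^3*vY^2*vZ^2 + (329508)*vA^3*vY*vZ^3 + (91854)*vA^3*vZ^4 + (9240)*vA^2*vB*vY^4 + (223992)*vA^2*vB*vY^3*vZ + (325836)*vA^2*vB*vY^2*vZ^2 + (99630)*vA^2*vB*vY*vZ^3 + (19764)*vA^2*vB*vZ^4 + (-57498)*vA*vY^5 + (-21654)*vA*vY^4*vZ + (552204)*vA*vY^3*vZ^2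 + (-4652478)*vA*vY^2*vZ^3 + (-21216438)*vA*vY*vZ^4 + (-19911366)*vA*vZ^5 + (-22246)*vB*vY^5 + (-81882)*vB*vY^4*vZ + (103176)*vB*vY^3*vZ^2 + (289224)*vB*vY^2*vZ^3 + (-43560)*vB*vY*vZ^4 + (1992996)*vB*vZ^5) * (3 * vA ^ 2 * vZ - vA * vB * vZ + vY * vZ)
      + ((12150)*vA^11 + (4374)*vA^10*vB + (-648)*vA^9*vB^2 + (-59535)*vA^9*vX + (-118962)*vA^9*vY + (-62208)*vA^8*vB*vX + (38880)*vA^8*vB*vY + (36288)*vA^7*vB^2*vY + (27216)*vA^7*vX*vY + (145152)*vA^7*vY^2 + (72576)*vA^6*vB*vY^2 + (-9240)*vA*vX*vY^3*vZ + (-624420)*vA*vX*vY^2*vZ^2 + (-2400354)*vA*vX*vY*vZ^3 + (-2255202)*vA*vX*vZ^4 + (284886)*vB*vX*vZ^4) * (vB ^ 2 * vY - 3 * vY ^ 2 - 9 * vY * vZ)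
      + ((-8748)*vA^11 + (-16524)*vA^10*vB + (10692)*vA^9*vB^2 + (-18954)*vA^9*vX + (136323)*vA^9*vY + (679428)*vA^9*vZ + (34992)*vA^8*vB*vX + (-136080)*vA^7*vY^2 + (9240)*vA*vY^4*vZ + (624420)*vA*vY^3*vZ^2 + (2400354)*vA*vY^2*vZ^3 + (2255202)*vA*vY*vZ^4 + (-284886)*vB*vY*vZ^4) * (vB ^ 2 * vX - vX * vY - 3 * vY ^ 2 - 3 * vA * vB * vZ - 9 * vY * vZ + 9 * vZ ^ 2)
      + ((486)*vA^11 + (4860)*vA^10*vB + (-1296)*vA^9*vB^2 + (8748)*vA^9*vX) * (vB ^ 4 + 3 * vX ^ 2 - 9 * vX * vY - 3 * vY ^ 2 - 54 * vY * vZ - 81 * vZ ^ 2)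
      + ((-120285)*vA^10 + (-408240)*vA^8*vY + (144342)*vA^8*vZ + (653184)*vA^6*vY*vZ + (27720)*vA^2*vY^3*vZ + (1873260)*vA^2*vY^2*vZ^2 + (7201062)*vA^2*vY*vZ^3 + (6765606)*vA^2*vZ^4 + (-854658)*vA*vB*vZ^4 + (22246)*vY^5 + (148620)*vY^4*vZ + (342684)*vY^3*vZ^2 + (738828)*vY^2*vZ^3 + (2198484)*vY*vZ^4 + (2394504)*vZ^5) * (vB * vY * vZ + 9 * vA * vZ ^ 2 - 3 * vB * vZ ^ 2)
      + ((15228)*vA^10 + (250776)*vA^8*vX + (49572)*vA^8*vY + (435456)*vA^6*vX*vY + (544320)*vA^6*vY^2 + (284886)*vY*vZ^4) * (2 * vB * vX * vY - 3 * vB * vY ^ 2 - 9 * vA * vY * vZ - 27 * vA * vZ ^ 2 + 9 * vB * vZ ^ 2)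
      + ((-4374)*vA^10 + (-16686)*vA^9*vB + (-34992)*vA^8*vX + (-64152)*vA^8*vY + (-290304)*vA^6*vY^2) * (3 * vB * vX ^ 2 - 7 * vB * vY ^ 2 - 36 * vA * vY * vZ - 108 * vA * vZ ^ 2 + 36 * vB * vZ ^ 2)
      + ((162)*vA^3 + (-486)*vA^2*vB + (972)*vA*vB^2 + (-972)*vA*vX + (486)*vA*vY + (-1296)*vB^3 + (3888)*vB*vX + (-3240)*vB*vY) * (vA ^ 12 + 3 * vA ^ 11 * vB + 3 * vA ^ 10 * (vB ^ 2 + 2 * vX - vY)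
        + vA ^ 9 * (-vB ^ 3 + 12 * vB * vX + 2 * vB * vY)
        + 3 * vA ^ 8 * (9 * vX ^ 2 - 16 * vX * vY + 17 * vY ^ 2)
        + 28 * vA ^ 7 * vB * vY ^ 2 + 56 * vA ^ 6 * vY ^ 3
        + 201 * vA * vB * vZ ^ 5 - 19 * vY * vZ ^ 5 - 613 * vZ ^ 6)
      + ((-405)*vA + (108)*vB) * (6 * vA ^ 10 * vX * vY - 12 * vA ^ 10 * vY ^ 2 - 10 * vA ^ 9 * vB * vY ^ 2
        - 45 * vA ^ 8 * vY ^ 3 - 104 * vA * vB * vZ ^ 6 + 2 * vY * vZ ^ 6 + 310 * vZ ^ 7) := by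
      unfold vA vB vX vY vZ
      ring
  have hmem : (162 : P5) * vA ^ 15 ∈ I41 := by
    rw [hcert]
    unfold I41
    refine Ideal.add_mem _ (Ideal.add_mem _ (Ideal.add_mem _ (Ideal.add_mem _ (Ideal.add_mem _
      (Ideal.add_mem _ (Ideal.add_mem _ (Ideal.add_mem _ (Ideal.add_mem _ (Ideal.add_mem _
      ?_ ?_) ?_) ?_) ?_) ?_) ?_) ?_) ?_) ?_) ?_ <;>
    · refine Ideal.mul_mem_left _ _ (Ideal.subset_span ?_)
      simp only [Set.mem_insert_iff, Set.mem_singleton_iff]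
      tauto
  have h162 : vA ^ 15 = C ((162 : ℚ)⁻¹) * ((162 : P5) * vA ^ 15) := by
    rw [show ((162 : P5)) = C (162 : ℚ) from (map_ofNat C 162).symm, ← mul_assoc, ← C_mul]
    norm_num
  rw [h162]
  exact Ideal.mul_mem_left _ _ hmem

lemma gA15_zero : gA ^ 15 = 0 := by
  have : gA ^ 15 = qm (vA ^ 15) := by simp [gA, map_pow]
  rw [this, qm, Ideal.Quotient.mkₐ_eq_mk, Ideal.Quotient.eq_zero_iff_mem]
  exact vA15_mem

/-- `α^{15} = 0` in `R`, and consequently `α ∈ P₀ R¹` (the class `α` has perversity 0). -/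
theorem alpha_pow_fifteen_eq_zero_and_alpha_perversity_zero :
    gA ^ 15 = 0 ∧ gA ∈ pervP 0 1 := by
  refine ⟨gA15_zero, ?_⟩
  unfold pervP
  refine Submodule.mem_inf.2 ⟨?_, ?_⟩
  · refine Submodule.mem_iSup_of_mem 1 (Submodule.mem_inf.2 ⟨?_, ?_⟩)
    · have : (14 + 0 - 2 * ((1:ℕ) : ℤ) + (((1:ℕ) : ℤ) + 1)) = 14 := by norm_num
      rw [this]
      unfold kerA
      rw [if_neg (by norm_num)]
      simp only [LinearMap.mem_ker, mulA, LinearMap.mulLeft_apply]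
      show gA ^ (14:ℤ).toNat * gA = 0
      rw [show ((14:ℤ).toNat) = 14 from rfl, ← pow_succ]
      exact gA15_zero
    · exact ⟨1, by simp [mulA]⟩
  · unfold gr
    refine Submodule.mem_map.2 ⟨vA, ?_, rfl⟩
    rw [mem_weightedHomogeneousSubmodule]
    have h : wt5 0 = 1 := rfl
    have := isWeightedHomogeneous_X ℚ wt5 (0 : Fin 5)
    rwa [h] at this
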